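/- arXiv:1210.7380 — 3 statements merged into one kernel-verified Lean document; each statement's English description precedes it below -/
import Mathlib

section
/- For a positive integer n, the sup norm of P_n(θ) = ∏_{k=1}^n (1 - e^{ikθ}) over θ ∈ [0, 2π] is at least n + 1. -/
open Complex Finset

set_option maxHeartbeats 1000000 in
theorem stmt_5 (n : ℕ) (hn : 0 < n) :
    (n + 1 : ℝ) ≤
      ⨆ θ : Set.Icc (0 : ℝ) (2 * Real.pi),
        ‖(∏ k ∈ Finset.Icc 1 n,
          (1 - Complex.exp (Complex.I * k * (θ : ℝ))))‖ := by
  have hpi := Real.pi_pos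
  set θ₀ : ℝ := 2 * Real.pi / (n + 1) with hθ₀
  have hmem : θ₀ ∈ Set.Icc (0 : ℝ) (2 * Real.pi) := by
    constructor
    · positivity
    · rw [hθ₀, div_le_iff₀ (by positivity)]
      nlinarith [hpi]
  set f : Set.Icc (0 : ℝ) (2 * Real.pi) → ℝ := fun θ =>
    ‖(∏ k ∈ Finset.Icc 1 n,
      (1 - Complex.exp (Complex.I * k * (θ : ℝ))))‖ with hf
  have hbdd : BddAbove (Set.range f) := by
    refine ⟨2 ^ n, ?_⟩
    rintro y ⟨θ, rfl⟩
    rw [hf]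
    simp only
    rw [norm_prod]
    calc ∏ k ∈ Finset.Icc 1 n, ‖1 - Complex.exp (Complex.I * k * (θ : ℝ))‖
        ≤ ∏ k ∈ Finset.Icc 1 n, 2 := by
          apply Finset.prod_le_prod (fun _ _ => by positivity)
          intro k _
          calc ‖1 - Complex.exp (Complex.I * k * (θ : ℝ))‖
              ≤ ‖(1:ℂ)‖ + ‖Complex.exp (Complex.I * k * (θ : ℝ))‖ :=
                norm_sub_le _ _
            _ ≤ 2 := by
                rw [Complex.norm_exp]
                simp [mul_comm, mul_assoc]
                norm_num
      _ ≤ 2 ^ n := by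
          rw [Finset.prod_const]
          exact pow_le_pow_right₀ (by norm_num) (by simp)
  have key : f ⟨θ₀, hmem⟩ = n + 1 := by
    have hprim : IsPrimitiveRoot (Complex.exp (2 * (Real.pi : ℂ) * Complex.I / ((n : ℂ) + 1)))
        (n + 1) := by
      have h := Complex.isPrimitiveRoot_exp (n + 1) (by omega)
      push_cast at h
      exact h
    have hval : ∏ k ∈ Finset.Icc 1 n, (1 - Complex.exp (Complex.I * k * (θ₀ : ℝ)))
        = ((n : ℂ) + 1) := by
      have := hprim.prod_one_sub_pow_eq_order
      rw [← this]
      rw [← Finset.Ico_add_one_right_eq_Icc, Finset.prod_Ico_eq_prod_range]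
      simp only [Nat.add_sub_cancel]
      apply Finset.prod_congr rfl
      intro k _
      congr 1
      rw [← Complex.exp_nat_mul]
      congr 1
      push_cast [hθ₀]
      have : ((n : ℂ) + 1) ≠ 0 := Nat.cast_add_one_ne_zero n
      field_simp
      ring
    rw [hf]
    simp only
    rw [hval]
    rw [show ((n : ℂ) + 1) = ((n + 1 : ℝ) : ℂ) by push_cast; ring]
    rw [Complex.norm_real, Real.norm_eq_abs, abs_of_pos (by positivity)]
  calc (n + 1 : ℝ) = f ⟨θ₀, hmem⟩ := key.symm
    _ ≤ ⨆ θ, f θ := le_ciSup hbdd _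
end

section
/- There exists a constant C₀ > 0 such that for all integers n ≥ 2, n^{-C₀} e^{An} ≤ |∏_{k=1}^n (1 - e^{ik·3π/(2n)})| ≤ n^{C₀} e^{An}, where A = 2G/(3π) and G is Catalan's constant. -/
open Finset Real MeasureTheory intervalIntegral Set Filter Topology


lemma sin_ge_div5 {x : ℝ} (h0 : 0 ≤ x) (h1 : x ≤ 3*π/4) : x/5 ≤ Real.sin x := by
  rcases le_or_gt x (π/2) with h|h
  · refine le_trans ?_ (Real.mul_le_sin h0 h)
    rw [div_mul_eq_mul_div, div_le_div_iff₀ (by norm_num) Real.pi_pos]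
    nlinarith [Real.pi_lt_d2, mul_nonneg h0 (by nlinarith [Real.pi_lt_d2] : (0:ℝ) ≤ 10 - π)]
  · have h2 : Real.sin x = Real.sin (π - x) := (Real.sin_pi_sub x).symm
    have h3 : 0 ≤ π - x := by nlinarith [Real.pi_pos]
    have h4 : π - x ≤ π/2 := by linarith
    have h5 := Real.mul_le_sin h3 h4
    rw [← h2] at h5
    refine le_trans ?_ h5
    rw [div_mul_eq_mul_div, div_le_div_iff₀ (by norm_num) Real.pi_pos]
    nlinarith [Real.pi_lt_d2, Real.pi_pos]

lemma sin_pos_of_mem {x : ℝ} (h0 : 0 < x) (h1 : x ≤ 3*π/4) : 0 < Real.sin x :=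
  lt_of_lt_of_le (by linarith : 0 < x/5) (sin_ge_div5 h0.le h1)

lemma log2sin_abs_le {t : ℝ} (h0 : 0 < t) (h1 : t ≤ 3*π/4) :
    |Real.log (2 * Real.sin t)| ≤ 2 + |Real.log t| := by
  have hs := sin_ge_div5 h0.le h1
  have hsp := sin_pos_of_mem h0 h1
  rw [abs_le]
  constructor
  · have hle : Real.log (2/5 * t) ≤ Real.log (2 * Real.sin t) :=
      Real.log_le_log (by positivity) (by linarith)
    rw [Real.log_mul (by norm_num) h0.ne'] at hle
    have h25 : -2 ≤ Real.log (2/5) := by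
      have : Real.log (5/2) ≤ 5/2 - 1 := Real.log_le_sub_one_of_pos (by norm_num)
      have h52 : Real.log (2/5) = - Real.log (5/2) := by
        rw [← Real.log_inv]; norm_num
      linarith
    have := neg_abs_le (Real.log t)
    linarith
  · have hle : Real.log (2 * Real.sin t) ≤ Real.log 2 :=
      Real.log_le_log (by positivity) (by nlinarith [Real.sin_le_one t])
    have h2 : Real.log 2 ≤ 1 := by
      have := Real.log_le_sub_one_of_pos (by norm_num : (0:ℝ) < 2); linarith
    have := abs_nonneg (Real.log t)
    linarith

lemma abs_log_le_rpow {t : ℝ} (h0 : 0 < t) (h1 : t ≤ 3) :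
    |Real.log t| ≤ 2 + 2 * t ^ (-(1/2) : ℝ) := by
  have hrp : 0 ≤ t ^ (-(1/2) : ℝ) := Real.rpow_nonneg h0.le _
  rcases le_or_gt t 1 with h|h
  · have habs : |Real.log t| = - Real.log t :=
      abs_of_nonpos (Real.log_nonpos h0.le h)
    have hlr : Real.log (t ^ (-(1/2):ℝ)) = -(1/2) * Real.log t := Real.log_rpow h0 _
    have hub : Real.log (t ^ (-(1/2):ℝ)) ≤ t ^ (-(1/2):ℝ) - 1 :=
      Real.log_le_sub_one_of_pos (Real.rpow_pos_of_pos h0 _)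
    rw [habs]; rw [hlr] at hub; linarith
  · have habs : |Real.log t| = Real.log t := abs_of_nonneg (Real.log_nonneg h.le)
    have := Real.log_le_sub_one_of_pos h0
    rw [habs]; linarith

lemma masterInt {f : ℝ → ℝ} {b : ℝ} (hb : 0 < b) (hm : Measurable f)
    (hbd : ∀ t ∈ Ioc (0:ℝ) b, |f t| ≤ 8 + 2 * t ^ (-(1/2):ℝ)) :
    IntervalIntegrable f volume 0 b := by
  rw [intervalIntegrable_iff_integrableOn_Ioc_of_le hb.le]
  have hg : IntervalIntegrable (fun t => 8 + 2 * t ^ (-(1/2):ℝ)) volume 0 b :=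
    intervalIntegrable_const.add
      ((intervalIntegral.intervalIntegrable_rpow' (by norm_num)).const_mul 2)
  rw [intervalIntegrable_iff_integrableOn_Ioc_of_le hb.le] at hg
  refine MeasureTheory.Integrable.mono hg hm.aestronglyMeasurable ?_
  rw [ae_restrict_iff' measurableSet_Ioc]
  refine ae_of_all _ fun t ht => ?_
  have h1 := hbd t ht
  have h2 : 0 ≤ t ^ (-(1/2):ℝ) := Real.rpow_nonneg ht.1.le _
  simp only [Real.norm_eq_abs]
  exact h1.trans (le_abs_self _)

lemma pi34_le3 : 3*π/4 ≤ 3 := by nlinarith [Real.pi_lt_d2]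

lemma meas_log2sin : Measurable (fun t : ℝ => Real.log (2 * Real.sin t)) :=
  Real.measurable_log.comp (Real.measurable_sin.const_mul 2)

lemma intlogsin {b : ℝ} (hb : 0 < b) (h3 : b ≤ 3*π/4) :
    IntervalIntegrable (fun t => Real.log (2 * Real.sin t)) volume 0 b := by
  refine masterInt hb meas_log2sin fun t ht => ?_
  have h1 := log2sin_abs_le ht.1 (le_trans ht.2 h3)
  have h2 := abs_log_le_rpow ht.1 (le_trans ht.2 (le_trans h3 pi34_le3))
  linarith
lemma abs_two_sub_log {t : ℝ} (h0 : 0 < t) (h3 : t ≤ 3) :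
    |2 - Real.log t| ≤ 8 + 2 * t ^ (-(1/2):ℝ) := by
  have h := abs_log_le_rpow h0 h3
  rw [sub_eq_add_neg]
  refine (abs_add_le _ _).trans ?_
  rw [abs_neg]
  have : |(2:ℝ)| = 2 := by norm_num
  linarith

lemma integral_two_sub_log {h : ℝ} (h0 : 0 < h) (h3 : h ≤ 3) :
    ∫ t in (0:ℝ)..h, (2 - Real.log t) = h * (3 - Real.log h) := by
  have hint : IntervalIntegrable (fun t => 2 - Real.log t) volume 0 h :=
    masterInt h0 (measurable_const.sub Real.measurable_log)
      (fun t ht => abs_two_sub_log ht.1 (le_trans ht.2 h3))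
  have hder : ∀ x ∈ Set.Ioo (0:ℝ) h,
      HasDerivAt (fun t => 3*t - t * Real.log t) (2 - Real.log x) x := by
    intro x hx
    have h1 : HasDerivAt (fun t : ℝ => t * Real.log t) (1 * Real.log x + x * x⁻¹) x :=
      (hasDerivAt_id x).mul (Real.hasDerivAt_log hx.1.ne')
    have h2 : HasDerivAt (fun t => 3*t - t * Real.log t) (3*1 - (1 * Real.log x + x * x⁻¹)) x :=
      ((hasDerivAt_id x).const_mul (3:ℝ)).sub h1
    convert h2 using 1
    rw [mul_inv_cancel₀ hx.1.ne']
    ring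
  have hB : Tendsto (fun t : ℝ => t * Real.log t) (𝓝[>] (0:ℝ)) (𝓝 0) := by
    refine (tendsto_log_mul_rpow_nhdsGT_zero one_pos).congr' ?_
    filter_upwards [self_mem_nhdsWithin] with x (hx : x ∈ Set.Ioi (0:ℝ))
    rw [Real.rpow_one, mul_comm]
  have h0t : Tendsto (fun t : ℝ => 3*t - t * Real.log t) (𝓝[>] (0:ℝ)) (𝓝 0) := by
    have hA : Tendsto (fun t : ℝ => 3*t) (𝓝[>] (0:ℝ)) (𝓝 0) := by
      have : Tendsto (fun t : ℝ => 3*t) (𝓝 (0:ℝ)) (𝓝 0) := by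
        simpa using (continuous_mul_left (3:ℝ)).tendsto (0:ℝ)
      exact this.mono_left nhdsWithin_le_nhds
    simpa using hA.sub hB
  have hbt : Tendsto (fun t : ℝ => 3*t - t * Real.log t) (𝓝[<] h)
      (𝓝 (3*h - h * Real.log h)) := by
    have : ContinuousAt (fun t : ℝ => 3*t - t * Real.log t) h :=
      ((continuousAt_const.mul continuousAt_id).sub
        (continuousAt_id.mul (Real.continuousAt_log h0.ne')))
    exact this.tendsto.mono_left nhdsWithin_le_nhds
  rw [intervalIntegral.integral_eq_sub_of_hasDerivAt_of_tendsto h0 hder hint h0t hbt]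
  ring

lemma integral_pow_neg_log (k : ℕ) :
    ∫ x in (0:ℝ)..1, x^k * (-Real.log x) = 1/((k:ℝ)+1)^2 := by
  set c : ℝ := (k:ℝ) + 1 with hc
  have hcpos : 0 < c := by positivity
  have hint : IntervalIntegrable (fun x => x^k * (-Real.log x)) volume 0 1 := by
    refine masterInt one_pos ((measurable_id.pow_const k).mul Real.measurable_log.neg)
      (fun t ht => ?_)
    have h1 := abs_log_le_rpow ht.1 (le_trans ht.2 (by norm_num))
    have h2 : |t^k * (-Real.log t)| = t^k * |Real.log t| := by
      rw [abs_mul, abs_neg, abs_of_nonneg (pow_nonneg ht.1.le k)]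
    have h3 : t^k ≤ 1 := pow_le_one₀ ht.1.le ht.2
    have h4 : (0:ℝ) ≤ |Real.log t| := abs_nonneg _
    nlinarith [pow_nonneg ht.1.le k]
  have hder : ∀ x ∈ Set.Ioo (0:ℝ) 1,
      HasDerivAt (fun x => (x^(k+1) - c * (x^(k+1) * Real.log x)) / c^2)
        (x^k * (-Real.log x)) x := by
    intro x hx
    have hp : HasDerivAt (fun x : ℝ => x^(k+1)) ((k+1 : ℕ) * x^k) x := by
      simpa using hasDerivAt_pow (k+1) x
    have hl : HasDerivAt (fun x : ℝ => x^(k+1) * Real.log x)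
        (((k+1:ℕ)) * x^k * Real.log x + x^(k+1) * x⁻¹) x :=
      hp.mul (Real.hasDerivAt_log hx.1.ne')
    have h2 : HasDerivAt (fun x => (x^(k+1) - c * (x^(k+1) * Real.log x)) / c^2)
        ((((k+1:ℕ):ℝ) * x^k - c * (((k+1:ℕ):ℝ) * x^k * Real.log x + x^(k+1) * x⁻¹)) / c^2) x :=
      (hp.sub (hl.const_mul c)).div_const (c^2)
    convert h2 using 1
    have hx0 : x ≠ 0 := hx.1.ne'
    field_simp [hc]
    rw [hc]; push_cast; ring
  have h0t : Tendsto (fun x : ℝ => (x^(k+1) - c * (x^(k+1) * Real.log x)) / c^2)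
      (𝓝[>] (0:ℝ)) (𝓝 0) := by
    have hB : Tendsto (fun x : ℝ => x^(k+1) * Real.log x) (𝓝[>] (0:ℝ)) (𝓝 0) := by
      refine (tendsto_log_mul_rpow_nhdsGT_zero
        (by positivity : (0:ℝ) < (k:ℝ)+1)).congr' ?_
      filter_upwards [self_mem_nhdsWithin] with x (hx : x ∈ Set.Ioi (0:ℝ))
      rw [mul_comm, ← Real.rpow_natCast x (k+1)]
      push_cast
      ring_nf
    have hA : Tendsto (fun x : ℝ => x^(k+1)) (𝓝[>] (0:ℝ)) (𝓝 0) := by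
      have : Tendsto (fun x : ℝ => x^(k+1)) (𝓝 (0:ℝ)) (𝓝 0) := by
        simpa using (continuous_pow (k+1)).tendsto (0:ℝ)
      exact this.mono_left nhdsWithin_le_nhds
    have := (hA.sub (hB.const_mul c)).div_const (c^2)
    simpa using this
  have h1t : Tendsto (fun x : ℝ => (x^(k+1) - c * (x^(k+1) * Real.log x)) / c^2)
      (𝓝[<] (1:ℝ)) (𝓝 (1/c^2)) := by
    have hcont : ContinuousAt (fun x : ℝ => (x^(k+1) - c * (x^(k+1) * Real.log x)) / c^2)
        1 := by
      refine ContinuousAt.div_const ?_ _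
      exact (continuousAt_pow _ _).sub (continuousAt_const.mul
        ((continuousAt_pow _ _).mul (Real.continuousAt_log one_ne_zero)))
    have : (1:ℝ)^(k+1) - c * ((1:ℝ)^(k+1) * Real.log 1) = 1 := by simp
    simpa [this] using hcont.tendsto.mono_left nhdsWithin_le_nhds
  rw [intervalIntegral.integral_eq_sub_of_hasDerivAt_of_tendsto one_pos hder hint h0t h1t]
  rw [sub_zero, hc]
lemma geom_sum_id (M : ℕ) (x : ℝ) :
    (∑ m ∈ Finset.range M, (-1:ℝ)^m * x^(2*m)) * (1+x^2) = 1 - (-1)^M * x^(2*M) := by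
  induction M with
  | zero => simp
  | succ M ih => rw [Finset.sum_range_succ, add_mul, ih]; ring

lemma geom_identity (M : ℕ) (x : ℝ) :
    (-Real.log x)/(1+x^2) = (∑ m ∈ Finset.range M, (-1:ℝ)^m * (x^(2*m) * (-Real.log x)))
      + (-1)^M * x^(2*M) * (-Real.log x)/(1+x^2) := by
  have hx : (1:ℝ) + x^2 ≠ 0 := by positivity
  have hs := geom_sum_id M x
  have hfac : (∑ m ∈ Finset.range M, (-1:ℝ)^m * (x^(2*m) * (-Real.log x)))
      = (∑ m ∈ Finset.range M, (-1:ℝ)^m * x^(2*m)) * (-Real.log x) := by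
    rw [Finset.sum_mul]
    exact Finset.sum_congr rfl fun m _ => by ring
  rw [hfac]
  field_simp
  linear_combination (Real.log x) * hs

lemma int_term (m : ℕ) : IntervalIntegrable
    (fun x => (-1:ℝ)^m * (x^(2*m) * (-Real.log x))) volume 0 1 := by
  refine masterInt one_pos ?_ (fun t ht => ?_)
  · exact (measurable_const.mul ((measurable_id.pow_const _).mul Real.measurable_log.neg))
  · have h1 := abs_log_le_rpow ht.1 (le_trans ht.2 (by norm_num))
    have h2 : |(-1:ℝ)^m * (t^(2*m) * (-Real.log t))| = t^(2*m) * |Real.log t| := by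
      rw [abs_mul, abs_mul, abs_pow, abs_neg, abs_one, one_pow, one_mul, abs_neg,
        abs_of_nonneg (pow_nonneg ht.1.le _)]
    have h3 : t^(2*m) ≤ 1 := pow_le_one₀ ht.1.le ht.2
    have h4 : (0:ℝ) ≤ |Real.log t| := abs_nonneg _
    nlinarith [pow_nonneg ht.1.le (2*m)]

lemma int_pow_neg_log (k : ℕ) : IntervalIntegrable
    (fun x => x^k * (-Real.log x)) volume 0 1 := by
  refine masterInt one_pos ((measurable_id.pow_const _).mul Real.measurable_log.neg)
    (fun t ht => ?_)
  have h1 := abs_log_le_rpow ht.1 (le_trans ht.2 (by norm_num))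
  have h3 : t^k ≤ 1 := pow_le_one₀ ht.1.le ht.2
  have h2 : |t^k * (-Real.log t)| = t^k * |Real.log t| := by
    rw [abs_mul, abs_neg, abs_of_nonneg (pow_nonneg ht.1.le _)]
  nlinarith [pow_nonneg ht.1.le k, abs_nonneg (Real.log t)]

lemma rem_abs_le (M : ℕ) {t : ℝ} (h0 : 0 ≤ t) (h1 : t ≤ 1) :
    |(-1:ℝ)^M * t^(2*M) * (-Real.log t)/(1+t^2)| ≤ t^(2*M) * (-Real.log t) := by
  have hlog : Real.log t ≤ 0 := Real.log_nonpos h0 h1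
  have habs : |(-1:ℝ)^M * t^(2*M) * (-Real.log t)| = t^(2*M) * (-Real.log t) := by
    rw [abs_mul, abs_mul, abs_pow, abs_neg, abs_one, one_pow, one_mul,
      abs_of_nonneg (pow_nonneg h0 _), abs_of_nonneg (neg_nonneg.mpr hlog)]
  rw [abs_div, abs_of_pos (by positivity : (0:ℝ) < 1+t^2), habs]
  exact div_le_self (mul_nonneg (pow_nonneg h0 _) (neg_nonneg.mpr hlog))
    (by nlinarith : (1:ℝ) ≤ 1+t^2)

lemma int_rem (M : ℕ) : IntervalIntegrable
    (fun x => (-1:ℝ)^M * x^(2*M) * (-Real.log x)/(1+x^2)) volume 0 1 := by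
  refine masterInt one_pos ?_ (fun t ht => ?_)
  · exact ((measurable_const.mul (measurable_id.pow_const _)).mul
      Real.measurable_log.neg).div (measurable_const.add (measurable_id.pow_const 2))
  · have h1 := abs_log_le_rpow ht.1 (le_trans ht.2 (by norm_num))
    have h2 := rem_abs_le M ht.1.le ht.2
    have h3 : t^(2*M) ≤ 1 := pow_le_one₀ ht.1.le ht.2
    have hlog : Real.log t ≤ 0 := Real.log_nonpos ht.1.le ht.2
    have h4 : -Real.log t = |Real.log t| := (abs_of_nonpos hlog).symm
    nlinarith [pow_nonneg ht.1.le (2*M), abs_nonneg (Real.log t)]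

lemma int_main : IntervalIntegrable (fun x => (-Real.log x)/(1+x^2)) volume 0 1 := by
  refine masterInt one_pos ?_ (fun t ht => ?_)
  · exact Real.measurable_log.neg.div (measurable_const.add (measurable_id.pow_const 2))
  · have h1 := abs_log_le_rpow ht.1 (le_trans ht.2 (by norm_num))
    have hd : (1:ℝ) ≤ 1 + t^2 := by nlinarith
    have h2 : |(-Real.log t)/(1+t^2)| ≤ |Real.log t| := by
      rw [abs_div, abs_of_pos (by positivity : (0:ℝ) < 1+t^2), abs_neg]
      exact div_le_self (abs_nonneg _) hd
    linarith

lemma hasSum_catalan : HasSum (fun m : ℕ => (-1:ℝ)^m / (2*(m:ℝ)+1)^2)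
    (∫ x in (0:ℝ)..1, (-Real.log x)/(1+x^2)) := by
  set I := ∫ x in (0:ℝ)..1, (-Real.log x)/(1+x^2) with hI
  have hsummable : Summable (fun m : ℕ => (-1:ℝ)^m / (2*(m:ℝ)+1)^2) := by
    refine Summable.of_abs ?_
    have hcomp : Summable (fun m : ℕ => 1/((m:ℝ)+1)^2) := by
      have h2 : Summable (fun n : ℕ => 1/(n:ℝ)^2) :=
        Real.summable_one_div_nat_pow.mpr one_lt_two
      have := (summable_nat_add_iff 1).mpr h2
      simpa using this
    refine Summable.of_nonneg_of_le (fun m => abs_nonneg _) (fun m => ?_) hcomp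
    rw [abs_div, abs_pow, abs_neg, abs_one, one_pow]
    have h1 : ((m:ℝ)+1)^2 ≤ |(2*(m:ℝ)+1)^2| := by
      rw [abs_of_nonneg (by positivity)]
      nlinarith [Nat.cast_nonneg (α := ℝ) m]
    exact one_div_le_one_div_of_le (by positivity) h1
  have hbound : ∀ M : ℕ,
      |I - ∑ m ∈ Finset.range M, (-1:ℝ)^m / (2*(m:ℝ)+1)^2| ≤ 1/(2*(M:ℝ)+1)^2 := by
    intro M
    have hsum_int : IntervalIntegrable
        (fun x => ∑ m ∈ Finset.range M, (-1:ℝ)^m * (x^(2*m) * (-Real.log x)))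
        volume 0 1 := by
      have heq : (fun x => ∑ m ∈ Finset.range M, (-1:ℝ)^m * (x^(2*m) * (-Real.log x)))
          = (∑ m ∈ Finset.range M, fun x => (-1:ℝ)^m * (x^(2*m) * (-Real.log x))) := by
        ext x; rw [Finset.sum_apply]
      rw [heq]
      exact IntervalIntegrable.sum _ (fun m _ => int_term m)
    have e1 : I = (∑ m ∈ Finset.range M,
          ∫ x in (0:ℝ)..1, (-1:ℝ)^m * (x^(2*m) * (-Real.log x)))
        + ∫ x in (0:ℝ)..1, (-1:ℝ)^M * x^(2*M) * (-Real.log x)/(1+x^2) := by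
      rw [hI, intervalIntegral.integral_congr (g := fun x =>
          (∑ m ∈ Finset.range M, (-1:ℝ)^m * (x^(2*m) * (-Real.log x)))
            + (-1:ℝ)^M * x^(2*M) * (-Real.log x)/(1+x^2)) (fun x _ => geom_identity M x),
        intervalIntegral.integral_add hsum_int (int_rem M),
        intervalIntegral.integral_finset_sum (fun m _ => int_term m)]
    have e2 : (∑ m ∈ Finset.range M,
          ∫ x in (0:ℝ)..1, (-1:ℝ)^m * (x^(2*m) * (-Real.log x)))
        = ∑ m ∈ Finset.range M, (-1:ℝ)^m/(2*(m:ℝ)+1)^2 := by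
      refine Finset.sum_congr rfl fun m _ => ?_
      rw [intervalIntegral.integral_const_mul, integral_pow_neg_log (2*m)]
      push_cast
      ring
    have hmono : ∫ x in (0:ℝ)..1, |(-1:ℝ)^M * x^(2*M) * (-Real.log x)/(1+x^2)|
        ≤ ∫ x in (0:ℝ)..1, x^(2*M) * (-Real.log x) := by
      refine intervalIntegral.integral_mono_on zero_le_one ((int_rem M).abs)
        (int_pow_neg_log (2*M)) (fun x hx => rem_abs_le M hx.1 hx.2)
    have hrem : |∫ x in (0:ℝ)..1, (-1:ℝ)^M * x^(2*M) * (-Real.log x)/(1+x^2)|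
        ≤ 1/(2*(M:ℝ)+1)^2 := by
      refine le_trans (intervalIntegral.abs_integral_le_integral_abs zero_le_one) ?_
      refine le_trans hmono ?_
      rw [integral_pow_neg_log (2*M)]
      have : ((2*M : ℕ):ℝ) = 2*(M:ℝ) := by push_cast; ring
      rw [this]
    rw [e1, e2, add_sub_cancel_left]
    exact hrem
  have hz : Tendsto (fun M : ℕ => 1/(2*(M:ℝ)+1)^2) atTop (𝓝 0) := by
    refine squeeze_zero (fun M => by positivity) (fun M => ?_)
      tendsto_one_div_add_atTop_nhds_zero_nat
    refine one_div_le_one_div_of_le (by positivity) ?_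
    nlinarith [Nat.cast_nonneg (α := ℝ) M]
  have hpart : Tendsto (fun M => ∑ m ∈ Finset.range M, (-1:ℝ)^m / (2*(m:ℝ)+1)^2)
      atTop (𝓝 I) := by
    have h1 : Tendsto (fun M => (∑ m ∈ Finset.range M, (-1:ℝ)^m / (2*(m:ℝ)+1)^2) - I)
        atTop (𝓝 0) := by
      refine squeeze_zero_norm (fun M => ?_) hz
      rw [Real.norm_eq_abs, abs_sub_comm]
      exact hbound M
    have := h1.add_const I
    simpa using this
  have hts := hsummable.hasSum
  have := tendsto_nhds_unique hts.tendsto_sum_nat hpart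
  rwa [this] at hts
lemma measurable_tan' : Measurable Real.tan := by
  have : Real.tan = fun x => Real.sin x / Real.cos x := funext Real.tan_eq_sin_div_cos
  rw [this]
  exact Real.measurable_sin.div Real.measurable_cos

lemma int_neg_log_tan : IntervalIntegrable (fun t => -Real.log (Real.tan t))
    volume 0 (π/4) := by
  have hpi := Real.pi_pos
  refine masterInt (by linarith) (Real.measurable_log.comp measurable_tan').neg
    (fun t ht => ?_)
  have ht4 : t ≤ 3*π/4 := by linarith [ht.2]
  have hsp : 0 < Real.sin t := sin_pos_of_mem ht.1 ht4
  have hcp : 0 < Real.cos t := Real.cos_pos_of_mem_Ioo ⟨by linarith [ht.1], by linarith [ht.2]⟩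
  have hlt : Real.log (Real.tan t) = Real.log (Real.sin t) - Real.log (Real.cos t) := by
    rw [Real.tan_eq_sin_div_cos, Real.log_div hsp.ne' hcp.ne']
  have hls : Real.log (2*Real.sin t) = Real.log 2 + Real.log (Real.sin t) :=
    Real.log_mul two_ne_zero hsp.ne'
  have h1 := log2sin_abs_le ht.1 ht4
  have h2 := abs_log_le_rpow ht.1 (le_trans ht.2 (by nlinarith [Real.pi_lt_d2]))
  have hlog2 : Real.log 2 ≤ 1 := by
    have := Real.log_le_sub_one_of_pos (by norm_num : (0:ℝ) < 2); linarith
  have hlog2' : (0:ℝ) ≤ Real.log 2 := Real.log_nonneg (by norm_num)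
  -- |log cos t| ≤ log 2
  have hcos_half : (1:ℝ)/2 ≤ Real.cos t := by
    have hc4 : Real.cos (π/4) ≤ Real.cos t := by
      rcases eq_or_lt_of_le ht.2 with h|h
      · rw [h]
      · exact (Real.cos_lt_cos_of_nonneg_of_le_pi (le_of_lt ht.1) (by linarith) h).le
        |>.trans (le_refl _)
    have : Real.cos (π/4) = Real.sqrt 2 / 2 := Real.cos_pi_div_four
    have h2' : (1:ℝ) ≤ Real.sqrt 2 := by
      rw [show (1:ℝ) = Real.sqrt 1 by simp]
      exact Real.sqrt_le_sqrt (by norm_num)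
    linarith [this ▸ hc4]
  have hlcos : |Real.log (Real.cos t)| ≤ Real.log 2 := by
    rw [abs_of_nonpos (Real.log_nonpos hcp.le (Real.cos_le_one t))]
    have := Real.log_le_log (by norm_num : (0:ℝ) < 1/2) hcos_half
    rw [show Real.log (1/2) = -Real.log 2 by rw [one_div, Real.log_inv]] at this
    linarith
  have hlsin : |Real.log (Real.sin t)| ≤ |Real.log (2*Real.sin t)| + Real.log 2 := by
    rw [hls] at *
    cases abs_cases (Real.log 2 + Real.log (Real.sin t)) with
    | inl h => cases abs_cases (Real.log (Real.sin t)) with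
      | inl h' => linarith [h.1, h'.1]
      | inr h' => linarith [le_abs_self (Real.log 2 + Real.log (Real.sin t)),
          neg_abs_le (Real.log 2 + Real.log (Real.sin t)), h'.1]
    | inr h => cases abs_cases (Real.log (Real.sin t)) with
      | inl h' => linarith [h.1, h'.1, neg_abs_le (Real.log 2 + Real.log (Real.sin t))]
      | inr h' => linarith [h.1, h'.1, neg_abs_le (Real.log 2 + Real.log (Real.sin t))]
  have : |(-Real.log (Real.tan t))| ≤ |Real.log (2*Real.sin t)| + Real.log 2 + Real.log 2 := by
    rw [abs_neg, hlt]
    refine (abs_sub _ _).trans ?_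
    linarith
  linarith

lemma Q_add_P :
    (∫ t in (0:ℝ)..(π/4), Real.log (2*Real.sin t))
      + (∫ t in (0:ℝ)..(π/4), Real.log (2*Real.cos t)) = 0 := by
  have hpi := Real.pi_pos
  set Q := ∫ t in (0:ℝ)..(π/4), Real.log (2*Real.sin t) with hQ
  set P := ∫ t in (0:ℝ)..(π/4), Real.log (2*Real.cos t) with hP
  have hQint : IntervalIntegrable (fun t => Real.log (2*Real.sin t)) volume 0 (π/4) :=
    intlogsin (by linarith) (by linarith)
  have hPint : IntervalIntegrable (fun t => Real.log (2*Real.cos t)) volume 0 (π/4) := by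
    refine (ContinuousOn.log ?_ ?_).intervalIntegrable
    · exact (continuous_const.mul Real.continuous_cos).continuousOn
    · intro x hx
      rw [Set.uIcc_of_le (by linarith)] at hx
      have : 0 < Real.cos x := Real.cos_pos_of_mem_Ioo
        ⟨by linarith [hx.1], by linarith [hx.2]⟩
      positivity
  -- reflection : P = ∫_{π/4}^{π/2} log(2 sin)
  have hrefl : P = ∫ t in (π/4)..(π/2), Real.log (2*Real.sin t) := by
    have h1 : P = ∫ x in (0:ℝ)..(π/4),
        (fun t => Real.log (2*Real.sin t)) (π/2 - x) := by
      rw [hP]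
      refine intervalIntegral.integral_congr fun x _ => ?_
      simp [Real.sin_pi_div_two_sub]
    rw [h1, intervalIntegral.integral_comp_sub_left (fun t => Real.log (2*Real.sin t)) (π/2)]
    rw [show π/2 - π/4 = π/4 by ring, sub_zero]
  -- doubling: Q + P = (1/2) ∫_0^{π/2}
  have hdouble : Q + P = (2:ℝ)⁻¹ * ∫ t in (0:ℝ)..(π/2), Real.log (2*Real.sin t) := by
    rw [hQ, hP, ← intervalIntegral.integral_add hQint hPint]
    have hcongr : ∫ t in (0:ℝ)..(π/4),
        (Real.log (2*Real.sin t) + Real.log (2*Real.cos t))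
        = ∫ t in (0:ℝ)..(π/4), (fun u => Real.log (2*Real.sin u)) (2*t) := by
      refine intervalIntegral.integral_congr_ae (MeasureTheory.ae_of_all _ fun x hx => ?_)
      rw [Set.uIoc_of_le (by linarith : (0:ℝ) ≤ π/4)] at hx
      have hsp : 0 < Real.sin x := sin_pos_of_mem hx.1 (by linarith [hx.2])
      have hcp : 0 < Real.cos x := Real.cos_pos_of_mem_Ioo
        ⟨by linarith [hx.1], by linarith [hx.2]⟩
      simp only
      rw [← Real.log_mul (by positivity) (by positivity), Real.sin_two_mul]
      ring_nf
    rw [hcongr, intervalIntegral.integral_comp_mul_left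
      (fun u => Real.log (2*Real.sin u)) two_ne_zero]
    rw [show (2:ℝ) * (π/4) = π/2 by ring, mul_zero]
    simp
  have hsplit : (∫ t in (0:ℝ)..(π/2), Real.log (2*Real.sin t)) = Q + P := by
    rw [hrefl, hQ]
    refine (intervalIntegral.integral_add_adjacent_intervals hQint ?_).symm
    refine (intlogsin (b := π/2) (by linarith) (by linarith)).mono_set ?_
    rw [Set.uIcc_of_le (by linarith : (π:ℝ)/4 ≤ π/2), Set.uIcc_of_le (by linarith : (0:ℝ) ≤ π/2)]
    exact Set.Icc_subset_Icc (by linarith : (0:ℝ) ≤ π/4) le_rfl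
  rw [hsplit] at hdouble
  linarith
lemma P_sub_Q :
    (∫ t in (0:ℝ)..(π/4), Real.log (2*Real.cos t))
      - (∫ t in (0:ℝ)..(π/4), Real.log (2*Real.sin t))
      = ∫ t in (0:ℝ)..(π/4), -Real.log (Real.tan t) := by
  have hpi := Real.pi_pos
  have hQint : IntervalIntegrable (fun t => Real.log (2*Real.sin t)) volume 0 (π/4) :=
    intlogsin (by linarith) (by linarith)
  have hPint : IntervalIntegrable (fun t => Real.log (2*Real.cos t)) volume 0 (π/4) := by
    refine (ContinuousOn.log ?_ ?_).intervalIntegrable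
    · exact (continuous_const.mul Real.continuous_cos).continuousOn
    · intro x hx
      rw [Set.uIcc_of_le (by linarith)] at hx
      have : 0 < Real.cos x := Real.cos_pos_of_mem_Ioo
        ⟨by linarith [hx.1], by linarith [hx.2]⟩
      positivity
  rw [← intervalIntegral.integral_sub hPint hQint]
  refine intervalIntegral.integral_congr_ae (MeasureTheory.ae_of_all _ fun x hx => ?_)
  rw [Set.uIoc_of_le (by linarith : (0:ℝ) ≤ π/4)] at hx
  have hsp : 0 < Real.sin x := sin_pos_of_mem hx.1 (by linarith [hx.2])
  have hcp : 0 < Real.cos x := Real.cos_pos_of_mem_Ioo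
    ⟨by linarith [hx.1], by linarith [hx.2]⟩
  rw [Real.tan_eq_sin_div_cos, Real.log_div hsp.ne' hcp.ne',
    Real.log_mul two_ne_zero hsp.ne', Real.log_mul two_ne_zero hcp.ne']
  ring

lemma T_eq_catalan_integral :
    (∫ t in (0:ℝ)..(π/4), -Real.log (Real.tan t))
      = ∫ x in (0:ℝ)..1, (-Real.log x)/(1+x^2) := by
  have hpi := Real.pi_pos
  set g : ℝ → ℝ := fun x => (-Real.log x)/(1+x^2) with hg
  set l : Filter ℝ := nhdsWithin 0 (Set.Ioc (0:ℝ) (π/4)) with hl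
  haveI hne : l.NeBot := by
    rw [hl]
    refine mem_closure_iff_nhdsWithin_neBot.mp ?_
    rw [closure_Ioc (by linarith : (0:ℝ) ≠ π/4)]
    exact Set.left_mem_Icc.mpr (by linarith)
  -- continuity of the two primitives
  have hTi : MeasureTheory.IntegrableOn (fun t => -Real.log (Real.tan t))
      (Set.uIcc 0 (π/4)) volume := by
    rw [Set.uIcc_of_le (by linarith : (0:ℝ) ≤ π/4), integrableOn_Icc_iff_integrableOn_Ioc]
    exact (intervalIntegrable_iff_integrableOn_Ioc_of_le (by linarith)).mp int_neg_log_tan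
  have hGi : MeasureTheory.IntegrableOn g (Set.uIcc 0 1) volume := by
    rw [Set.uIcc_of_le (by norm_num : (0:ℝ) ≤ 1), integrableOn_Icc_iff_integrableOn_Ioc]
    exact (intervalIntegrable_iff_integrableOn_Ioc_of_le (by norm_num)).mp int_main
  have hcont1 := intervalIntegral.continuousOn_primitive_interval_left hTi
  have hcont2 := intervalIntegral.continuousOn_primitive_interval_left hGi
  have hT1 : Tendsto (fun a => ∫ t in a..(π/4), -Real.log (Real.tan t)) l
      (𝓝 (∫ t in (0:ℝ)..(π/4), -Real.log (Real.tan t))) := by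
    have h0m : (0:ℝ) ∈ Set.uIcc 0 (π/4) := Set.left_mem_uIcc
    have := (hcont1 0 h0m).tendsto
    refine this.mono_left ?_
    rw [hl]
    refine nhdsWithin_mono 0 ?_
    rw [Set.uIcc_of_le (by linarith : (0:ℝ) ≤ π/4)]
    exact Set.Ioc_subset_Icc_self
  have htan : Tendsto Real.tan l (nhdsWithin 0 (Set.uIcc (0:ℝ) 1)) := by
    rw [tendsto_nhdsWithin_iff]
    constructor
    · have hc : ContinuousAt Real.tan 0 := Real.continuousAt_tan.mpr (by simp)
      have := hc.tendsto.mono_left (nhdsWithin_le_nhds (s := Set.Ioc (0:ℝ) (π/4)))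
      rwa [Real.tan_zero] at this
    · filter_upwards [self_mem_nhdsWithin] with a ha
      have ha' : a ∈ Set.Ioc (0:ℝ) (π/4) := ha
      have htp : 0 < Real.tan a :=
        Real.tan_pos_of_pos_of_lt_pi_div_two ha'.1 (by linarith [ha'.2])
      have hle : Real.tan a ≤ 1 := by
        rw [← Real.tan_pi_div_four]
        rcases eq_or_lt_of_le ha'.2 with h|h
        · rw [h]
        · exact (Real.strictMonoOn_tan ⟨by linarith [ha'.1], by linarith [ha'.2]⟩
            ⟨by linarith, by linarith⟩ h).le
      rw [Set.uIcc_of_le (by norm_num : (0:ℝ) ≤ 1)]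
      exact ⟨htp.le, hle⟩
  have hT2 : Tendsto (fun a => ∫ x in (Real.tan a)..1, g x) l
      (𝓝 (∫ x in (0:ℝ)..1, g x)) := by
    have h0m : (0:ℝ) ∈ Set.uIcc 0 1 := Set.left_mem_uIcc
    exact ((hcont2 0 h0m).tendsto).comp htan
  have hEq : ∀ᶠ a in l, (∫ t in a..(π/4), -Real.log (Real.tan t))
      = ∫ x in (Real.tan a)..1, g x := by
    filter_upwards [self_mem_nhdsWithin] with a ha
    have ha' : a ∈ Set.Ioc (0:ℝ) (π/4) := ha
    have hmem : ∀ x ∈ Set.uIcc a (π/4), x ∈ Set.Ioc (0:ℝ) (π/4) := by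
      intro x hx
      rw [Set.uIcc_of_le ha'.2] at hx
      exact ⟨lt_of_lt_of_le ha'.1 hx.1, hx.2⟩
    have hcosne : ∀ x ∈ Set.uIcc a (π/4), Real.cos x ≠ 0 := by
      intro x hx
      have h := hmem x hx
      exact (Real.cos_pos_of_mem_Ioo ⟨by linarith [h.1], by linarith [h.2]⟩).ne'
    have hderiv : ∀ x ∈ Set.uIcc a (π/4),
        HasDerivAt Real.tan (1/Real.cos x^2) x :=
      fun x hx => Real.hasDerivAt_tan (hcosne x hx)
    have hcont' : ContinuousOn (fun x => 1/Real.cos x^2) (Set.uIcc a (π/4)) := by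
      refine ContinuousOn.div continuousOn_const
        ((Real.continuous_cos.pow 2).continuousOn) ?_
      intro x hx
      exact pow_ne_zero 2 (hcosne x hx)
    have hgcont : ContinuousOn g (Real.tan '' (Set.uIcc a (π/4))) := by
      refine ContinuousOn.mono (s := Set.Ioi (0:ℝ)) ?_ ?_
      · refine ContinuousOn.div ?_ ?_ ?_
        · exact (Real.continuousOn_log.mono (by
            intro y hy; exact ne_of_gt hy)).neg
        · exact (continuous_const.add (continuous_pow 2)).continuousOn
        · intro y _; positivity
      · rintro _ ⟨x, hx, rfl⟩
        have h := hmem x hx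
        exact Real.tan_pos_of_pos_of_lt_pi_div_two h.1 (by linarith [h.2])
    have hsub := intervalIntegral.integral_comp_smul_deriv' hderiv hcont' hgcont
    have hlhs : ∫ x in a..(π/4), (1/Real.cos x^2) • ((g ∘ Real.tan) x)
        = ∫ t in a..(π/4), -Real.log (Real.tan t) := by
      refine intervalIntegral.integral_congr fun x hx => ?_
      have hcx := hcosne x hx
      simp only [Function.comp_apply, smul_eq_mul, hg]
      rw [div_eq_mul_inv (-Real.log (Real.tan x)), Real.inv_one_add_tan_sq hcx]
      field_simp
    rw [← hlhs, hsub, Real.tan_pi_div_four]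
  exact tendsto_nhds_unique (hT1.congr' hEq) hT2

lemma L_eq_half_catalan :
    (∫ t in (0:ℝ)..(3*π/4), Real.log (2*Real.sin t))
      = (∫ x in (0:ℝ)..1, (-Real.log x)/(1+x^2))/2 := by
  have hpi := Real.pi_pos
  set Q := ∫ t in (0:ℝ)..(π/4), Real.log (2*Real.sin t) with hQ
  set P := ∫ t in (0:ℝ)..(π/4), Real.log (2*Real.cos t) with hP
  have h1 : Q + P = 0 := Q_add_P
  have h2 : P - Q = ∫ x in (0:ℝ)..1, (-Real.log x)/(1+x^2) :=
    P_sub_Q.trans T_eq_catalan_integral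
  -- ∫_{π/2}^{3π/4} = P
  have h3 : P = ∫ t in (π/2)..(3*π/4), Real.log (2*Real.sin t) := by
    have e1 : P = ∫ x in (0:ℝ)..(π/4),
        (fun t => Real.log (2*Real.sin t)) (π/2 + x) := by
      rw [hP]
      refine intervalIntegral.integral_congr fun x _ => ?_
      simp only
      rw [Real.sin_add]
      simp
    rw [e1, intervalIntegral.integral_comp_add_left (fun t => Real.log (2*Real.sin t)) (π/2)]
    rw [show π/2 + π/4 = 3*π/4 by ring, add_zero]
  -- I2 = Q + P' with P' = P (reflection, as in Q_add_P)
  have hrefl : P = ∫ t in (π/4)..(π/2), Real.log (2*Real.sin t) := by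
    have e1 : P = ∫ x in (0:ℝ)..(π/4),
        (fun t => Real.log (2*Real.sin t)) (π/2 - x) := by
      rw [hP]
      refine intervalIntegral.integral_congr fun x _ => ?_
      simp [Real.sin_pi_div_two_sub]
    rw [e1, intervalIntegral.integral_comp_sub_left (fun t => Real.log (2*Real.sin t)) (π/2)]
    rw [show π/2 - π/4 = π/4 by ring, sub_zero]
  have hQint : IntervalIntegrable (fun t => Real.log (2*Real.sin t)) volume 0 (π/4) :=
    intlogsin (by linarith) (by linarith)
  have hmid : IntervalIntegrable (fun t => Real.log (2*Real.sin t)) volume (π/4) (π/2) := by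
    refine (intlogsin (b := π/2) (by linarith) (by linarith)).mono_set ?_
    rw [Set.uIcc_of_le (by linarith : (π:ℝ)/4 ≤ π/2), Set.uIcc_of_le (by linarith : (0:ℝ) ≤ π/2)]
    exact Set.Icc_subset_Icc (by linarith : (0:ℝ) ≤ π/4) le_rfl
  have hhigh : IntervalIntegrable (fun t => Real.log (2*Real.sin t)) volume (π/2) (3*π/4) := by
    refine (intlogsin (b := 3*π/4) (by linarith) le_rfl).mono_set ?_
    rw [Set.uIcc_of_le (by linarith : (π:ℝ)/2 ≤ 3*π/4), Set.uIcc_of_le (by linarith : (0:ℝ) ≤ 3*π/4)]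
    exact Set.Icc_subset_Icc (by linarith : (0:ℝ) ≤ π/2) le_rfl
  have hI2 : (∫ t in (0:ℝ)..(π/2), Real.log (2*Real.sin t)) = Q + P := by
    rw [hrefl, hQ]
    exact (intervalIntegral.integral_add_adjacent_intervals hQint hmid).symm
  have hL : (∫ t in (0:ℝ)..(3*π/4), Real.log (2*Real.sin t))
      = (∫ t in (0:ℝ)..(π/2), Real.log (2*Real.sin t))
        + ∫ t in (π/2)..(3*π/4), Real.log (2*Real.sin t) := by
    refine (intervalIntegral.integral_add_adjacent_intervals ?_ hhigh).symm
    exact (intlogsin (b := π/2) (by linarith) (by linarith)).mono_set le_rfl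
  rw [hL, hI2, ← h3]
  linarith
lemma harmonic_le_log (n : ℕ) (hn : 1 ≤ n) :
    (∑ k ∈ Finset.Icc 1 n, (1:ℝ)/k) ≤ 1 + Real.log n := by
  induction n, hn using Nat.le_induction with
  | base => simp
  | succ n hn ih =>
    rw [Finset.sum_Icc_succ_top (by omega : 1 ≤ n+1)]
    have hnpos : (0:ℝ) < n := by exact_mod_cast hn
    have key : (1:ℝ)/((n:ℝ)+1) ≤ Real.log ((n:ℝ)+1) - Real.log n := by
      have h1 : Real.log ((n:ℝ)/((n:ℝ)+1)) ≤ (n:ℝ)/((n:ℝ)+1) - 1 :=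
        Real.log_le_sub_one_of_pos (by positivity)
      rw [Real.log_div hnpos.ne' (by positivity)] at h1
      have h2 : (n:ℝ)/((n:ℝ)+1) - 1 = -(1/((n:ℝ)+1)) := by field_simp; ring
      linarith [h1.trans_eq h2]
    push_cast
    linarith

lemma log2sin_hasDerivAt {t : ℝ} (ht : 0 < Real.sin t) :
    HasDerivAt (fun u => Real.log (2*Real.sin u)) (Real.cos t/Real.sin t) t := by
  have h1 : HasDerivAt (fun u => 2*Real.sin u) (2*Real.cos t) t :=
    (Real.hasDerivAt_sin t).const_mul 2
  have h2 := h1.log (by positivity : 2*Real.sin t ≠ 0)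
  convert h2 using 1
  field_simp

lemma log_pi34_nonneg : 0 ≤ Real.log (3*π/4) :=
  Real.log_nonneg (by nlinarith [Real.pi_gt_d6])

lemma log_pi34_le_one : Real.log (3*π/4) ≤ 1 := by
  have h1 : (3*π/4 : ℝ) ≤ Real.exp 1 := by
    nlinarith [Real.pi_lt_d2, Real.exp_one_gt_d9]
  have := Real.log_le_log (by nlinarith [Real.pi_gt_d6] : (0:ℝ) < 3*π/4) h1
  rwa [Real.log_exp] at this

set_option maxHeartbeats 1000000 in
lemma riemann (n : ℕ) (hn : 2 ≤ n) :
    |(∑ k ∈ Finset.Icc 1 n, Real.log (2*Real.sin ((k:ℝ)*(3*π/(4*(n:ℝ)))))) -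
      (4*(n:ℝ)/(3*π)) * ∫ t in (0:ℝ)..(3*π/4), Real.log (2*Real.sin t)|
      ≤ 12 + 7*Real.log n := by
  have hpi := Real.pi_pos
  have hpi315 := Real.pi_lt_d2
  have hpi31 := Real.pi_gt_d6
  have hn1 : (1:ℝ) ≤ (n:ℝ) := by exact_mod_cast (by omega : 1 ≤ n)
  have hn2 : (2:ℝ) ≤ (n:ℝ) := by exact_mod_cast hn
  have hlogn : 0 ≤ Real.log n := Real.log_nonneg hn1
  set f : ℝ → ℝ := fun t => Real.log (2*Real.sin t) with hf
  set h : ℝ := 3*π/(4*(n:ℝ)) with hh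
  have hpos : 0 < h := by rw [hh]; positivity
  have hnh : (n:ℝ) * h = 3*π/4 := by
    rw [hh]; field_simp
  have hh38 : h ≤ 3*π/8 := by
    rw [hh, div_le_div_iff₀ (by positivity) (by norm_num)]
    nlinarith
  have hh3 : h ≤ 3 := by nlinarith
  have hh34 : h ≤ 3*π/4 := by nlinarith
  have hlogh : -Real.log h ≤ Real.log n := by
    have : Real.log h = Real.log (3*π/4) - Real.log n := by
      rw [hh, show 3*π/(4*(n:ℝ)) = (3*π/4)/(n:ℝ) by ring,
        Real.log_div (by positivity) (by positivity)]
    rw [this]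
    linarith [log_pi34_nonneg]
  have habs_logh : |Real.log h| ≤ 1 + Real.log n := by
    have he : Real.log h = Real.log (3*π/4) - Real.log n := by
      rw [hh, show 3*π/(4*(n:ℝ)) = (3*π/4)/(n:ℝ) by ring,
        Real.log_div (by positivity) (by positivity)]
    rw [he, abs_sub_comm]
    refine (abs_sub _ _).trans ?_
    rw [abs_of_nonneg hlogn, abs_of_nonneg log_pi34_nonneg]
    linarith [log_pi34_le_one]
  have hL : IntervalIntegrable f volume 0 (3*π/4) := intlogsin (by linarith) le_rfl
  set a : ℕ → ℝ := fun k => (k:ℝ)*h with ha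
  have hsub : ∀ k, k < n → IntervalIntegrable f volume (a k) (a (k+1)) := by
    intro k hk
    refine hL.mono_set ?_
    have hk1n : (k:ℝ)+1 ≤ (n:ℝ) := by
      have h' : (k+1:ℕ) ≤ n := hk
      exact_mod_cast h'
    have h1 : a k ≤ a (k+1) := by
      simp only [ha]; push_cast; nlinarith
    rw [Set.uIcc_of_le h1, Set.uIcc_of_le (by linarith : (0:ℝ) ≤ 3*π/4)]
    refine Set.Icc_subset_Icc ?_ ?_
    · simp only [ha]; positivity
    · simp only [ha]; push_cast; nlinarith
  have hdecomp : ∑ k ∈ Finset.range n, ∫ t in (a k)..(a (k+1)), f t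
      = ∫ t in (0:ℝ)..(3*π/4), f t := by
    rw [intervalIntegral.sum_integral_adjacent_intervals hsub]
    have h0 : a 0 = 0 := by simp [ha]
    have hn' : a n = 3*π/4 := by simp only [ha]; exact hnh
    rw [h0, hn']
  have hS : (∑ k ∈ Finset.Icc 1 n, f ((k:ℝ)*h)) = ∑ k ∈ Finset.range n, f (a (k+1)) := by
    rw [← Finset.Ico_add_one_right_eq_Icc, Finset.sum_Ico_eq_sum_range]
    refine Finset.sum_congr rfl fun k _ => ?_
    show f ((((1+k):ℕ):ℝ)*h) = f ((((k+1):ℕ):ℝ)*h)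
    rw [Nat.add_comm]
  -- k = 0 term
  have hint2 : IntervalIntegrable (fun t => 2 - Real.log t) volume 0 h :=
    masterInt hpos (measurable_const.sub Real.measurable_log)
      (fun t ht => abs_two_sub_log ht.1 (le_trans ht.2 hh3))
  have hint3 : IntervalIntegrable (fun t => 3 - Real.log t) volume 0 h := by
    have : (fun t : ℝ => 3 - Real.log t) = (fun t => (2 - Real.log t) + 1) := by
      funext t; ring
    rw [this]
    exact hint2.add intervalIntegrable_const
  have hfh : IntervalIntegrable f volume 0 h := intlogsin hpos hh34
  have hbd3 : ∀ t ∈ Set.Icc (0:ℝ) h, |f t| ≤ 3 - Real.log t := by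
    intro t ht
    rcases eq_or_lt_of_le ht.1 with rfl|htpos
    · simp [hf]
    have h1 := log2sin_abs_le htpos (le_trans ht.2 hh34)
    rcases le_or_gt t 1 with h2|h2
    · rw [abs_of_nonpos (Real.log_nonpos htpos.le h2)] at h1
      linarith
    · rw [abs_of_nonneg (Real.log_nonneg h2.le)] at h1
      have h3 : Real.log t ≤ Real.log (3*π/8) :=
        Real.log_le_log htpos (le_trans ht.2 hh38)
      have h4 : Real.log (3*π/8) ≤ 3*π/8 - 1 :=
        Real.log_le_sub_one_of_pos (by positivity)
      nlinarith
  have hterm0 : |h * f (a 1) - ∫ t in (a 0)..(a 1), f t| ≤ h * (7 + 2*Real.log n) := by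
    have ha0 : a 0 = 0 := by simp [ha]
    have ha1 : a 1 = h := by simp [ha]
    have e1 : |h * f (a 1)| ≤ h * (3 + Real.log n) := by
      rw [abs_mul, abs_of_pos hpos, ha1]
      have := log2sin_abs_le hpos hh34
      have h2 : |f h| ≤ 3 + Real.log n := by
        have := habs_logh
        simp only [hf] at *
        linarith
      exact mul_le_mul_of_nonneg_left h2 hpos.le
    have e2 : |∫ t in (a 0)..(a 1), f t| ≤ h * (4 + Real.log n) := by
      rw [ha0, ha1]
      refine (intervalIntegral.abs_integral_le_integral_abs hpos.le).trans ?_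
      have e3 : ∫ t in (0:ℝ)..h, |f t| ≤ ∫ t in (0:ℝ)..h, (3 - Real.log t) :=
        intervalIntegral.integral_mono_on hpos.le hfh.abs hint3 hbd3
      have e4 : ∫ t in (0:ℝ)..h, (3 - Real.log t) = h * (4 - Real.log h) := by
        have : (fun t : ℝ => 3 - Real.log t) = (fun t => (2 - Real.log t) + 1) := by
          funext t; ring
        rw [this, intervalIntegral.integral_add hint2 intervalIntegrable_const,
          integral_two_sub_log hpos hh3]
        simp
        ring
      rw [e4] at e3
      refine e3.trans ?_
      have : 4 - Real.log h ≤ 4 + Real.log n := by linarith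
      exact mul_le_mul_of_nonneg_left this hpos.le
    calc |h * f (a 1) - ∫ t in (a 0)..(a 1), f t|
        ≤ |h * f (a 1)| + |∫ t in (a 0)..(a 1), f t| := abs_sub _ _
      _ ≤ h * (3 + Real.log n) + h * (4 + Real.log n) := add_le_add e1 e2
      _ = h * (7 + 2*Real.log n) := by ring
  -- k ≥ 1 terms
  have htermk : ∀ k, 1 ≤ k → k < n →
      |h * f (a (k+1)) - ∫ t in (a k)..(a (k+1)), f t| ≤ h * (5/(k:ℝ)) := by
    intro k hk1 hkn
    have hk1' : (1:ℝ) ≤ (k:ℝ) := by exact_mod_cast hk1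
    have hkpos : (0:ℝ) < (k:ℝ) := by linarith
    have hkh : 0 < (k:ℝ)*h := by positivity
    have hk1n : (k:ℝ)+1 ≤ (n:ℝ) := by
      have h' : (k+1:ℕ) ≤ n := hkn
      exact_mod_cast h'
    have hup : ((k:ℝ)+1)*h ≤ 3*π/4 := by nlinarith
    have hale : a k ≤ a (k+1) := by simp only [ha]; push_cast; nlinarith
    set s : Set ℝ := Set.Icc ((k:ℝ)*h) (((k:ℝ)+1)*h) with hs
    have hsins : ∀ t ∈ s, 0 < Real.sin t := by
      intro t ht
      exact sin_pos_of_mem (lt_of_lt_of_le hkh ht.1) (le_trans ht.2 hup)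
    have hmvt : ∀ t ∈ s, |f (((k:ℝ)+1)*h) - f t| ≤ 5/(k:ℝ) := by
      have hderivW : ∀ t ∈ s, HasDerivWithinAt f (Real.cos t/Real.sin t) s t :=
        fun t ht => (log2sin_hasDerivAt (hsins t ht)).hasDerivWithinAt
      have hbdd : ∀ t ∈ s, ‖Real.cos t/Real.sin t‖ ≤ 5/((k:ℝ)*h) := by
        intro t ht
        have htpos : 0 < t := lt_of_lt_of_le hkh ht.1
        have hsint := hsins t ht
        have hsin5 : t/5 ≤ Real.sin t := sin_ge_div5 htpos.le (le_trans ht.2 hup)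
        have h1 : |Real.cos t/Real.sin t| ≤ 5/t := by
          rw [abs_div, abs_of_pos hsint, div_le_div_iff₀ hsint htpos]
          nlinarith [Real.abs_cos_le_one t]
        rw [Real.norm_eq_abs]
        refine h1.trans ?_
        gcongr
        exact ht.1
      intro t ht
      have hend : ((k:ℝ)+1)*h ∈ s := by
        rw [hs]; exact ⟨by nlinarith, le_rfl⟩
      have := Convex.norm_image_sub_le_of_norm_hasDerivWithin_le hderivW hbdd
        (convex_Icc _ _) ht hend
      rw [Real.norm_eq_abs] at this
      refine this.trans ?_
      have hdist : ‖((k:ℝ)+1)*h - t‖ ≤ h := by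
        rw [Real.norm_eq_abs, abs_of_nonneg (by linarith [ht.2])]
        linarith [ht.1]
      calc 5/((k:ℝ)*h) * ‖((k:ℝ)+1)*h - t‖ ≤ 5/((k:ℝ)*h) * h := by
            exact mul_le_mul_of_nonneg_left hdist (by positivity)
        _ = 5/(k:ℝ) := by field_simp
    have hconst : h * f (a (k+1)) = ∫ _t in (a k)..(a (k+1)), f (a (k+1)) := by
      rw [intervalIntegral.integral_const, smul_eq_mul]
      congr 1
      simp only [ha]; push_cast; ring
    have hsubk := hsub k hkn
    rw [hconst, ← intervalIntegral.integral_sub intervalIntegrable_const hsubk]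
    have hIsub : Set.uIoc (a k) (a (k+1)) ⊆ s := by
      rw [Set.uIoc_of_le hale, hs]
      refine le_trans Set.Ioc_subset_Icc_self ?_
      simp only [ha]; push_cast
      exact le_rfl
    have := intervalIntegral.norm_integral_le_of_norm_le_const
      (C := 5/(k:ℝ)) (f := fun t => f (a (k+1)) - f t) (a := a k) (b := a (k+1)) ?_
    · rw [Real.norm_eq_abs] at this
      refine this.trans ?_
      have : |a (k+1) - a k| = h := by
        simp only [ha]; push_cast
        rw [abs_of_nonneg (by nlinarith)]
        ring
      rw [this, mul_comm]
    · intro x hx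
      have hxs := hIsub hx
      have := hmvt x hxs
      rw [Real.norm_eq_abs]
      have hak1 : a (k+1) = ((k:ℝ)+1)*h := by simp only [ha]; push_cast; ring
      rwa [hak1]
  -- sum them
  have habs : |h * (∑ k ∈ Finset.Icc 1 n, f ((k:ℝ)*h)) - ∫ t in (0:ℝ)..(3*π/4), f t|
      ≤ h * (7 + 2*Real.log n) + ∑ k ∈ Finset.Ico 1 n, h * (5/(k:ℝ)) := by
    rw [hS, ← hdecomp, Finset.mul_sum, ← Finset.sum_sub_distrib]
    refine (Finset.abs_sum_le_sum_abs _ _).trans ?_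
    rw [Finset.range_eq_Ico, Finset.sum_eq_sum_Ico_succ_bot (by omega : 0 < n)]
    exact add_le_add hterm0 (Finset.sum_le_sum fun k hk =>
      htermk k (Finset.mem_Ico.mp hk).1 (Finset.mem_Ico.mp hk).2)
  have hharm : ∑ k ∈ Finset.Ico 1 n, h * (5/(k:ℝ)) ≤ h * (5*(1 + Real.log n)) := by
    have e1 : ∑ k ∈ Finset.Ico 1 n, h * (5/(k:ℝ))
        = h * 5 * ∑ k ∈ Finset.Ico 1 n, (1:ℝ)/(k:ℝ) := by
      rw [Finset.mul_sum]
      exact Finset.sum_congr rfl fun k _ => by ring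
    have hico : Finset.Ico 1 n = Finset.Icc 1 (n-1) := by
      rw [← Finset.Ico_add_one_right_eq_Icc]
      congr 1
      omega
    have e2 : ∑ k ∈ Finset.Ico 1 n, (1:ℝ)/(k:ℝ) ≤ 1 + Real.log n := by
      rw [hico]
      refine (harmonic_le_log (n-1) (by omega)).trans ?_
      have h1 : (0:ℝ) < ((n-1 : ℕ):ℝ) := by
        have : 1 ≤ n - 1 := by omega
        exact_mod_cast Nat.lt_of_lt_of_le Nat.zero_lt_one this
      have h2 : ((n-1:ℕ):ℝ) ≤ (n:ℝ) := by
        have : n - 1 ≤ n := by omega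
        exact_mod_cast this
      linarith [Real.log_le_log h1 h2]
    calc ∑ k ∈ Finset.Ico 1 n, h * (5/(k:ℝ)) = h * 5 * ∑ k ∈ Finset.Ico 1 n, (1:ℝ)/(k:ℝ) := e1
      _ ≤ h * 5 * (1 + Real.log n) := by
          exact mul_le_mul_of_nonneg_left e2 (by positivity)
      _ = h * (5*(1 + Real.log n)) := by ring
  have hfinal : |h * (∑ k ∈ Finset.Icc 1 n, f ((k:ℝ)*h)) - ∫ t in (0:ℝ)..(3*π/4), f t|
      ≤ h * (12 + 7*Real.log n) := by
    refine habs.trans ?_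
    refine (add_le_add_right hharm _).trans ?_
    nlinarith [hpos]
  -- conclude
  have hinv : 4*(n:ℝ)/(3*π) = 1/h := by
    rw [hh]; field_simp
  rw [hinv]
  have hid : (∑ k ∈ Finset.Icc 1 n, f ((k:ℝ)*h)) - (1/h) * ∫ t in (0:ℝ)..(3*π/4), f t
      = (1/h) * (h * (∑ k ∈ Finset.Icc 1 n, f ((k:ℝ)*h)) - ∫ t in (0:ℝ)..(3*π/4), f t) := by
    field_simp
    ring
  rw [hid, abs_mul, abs_of_pos (by positivity : (0:ℝ) < 1/h)]
  calc (1/h) * |h * (∑ k ∈ Finset.Icc 1 n, f ((k:ℝ)*h)) - ∫ t in (0:ℝ)..(3*π/4), f t|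
      ≤ (1/h) * (h * (12 + 7*Real.log n)) := by
        exact mul_le_mul_of_nonneg_left hfinal (by positivity)
    _ = 12 + 7*Real.log n := by field_simp
lemma abs_one_sub_exp (x : ℝ) (hx : 0 ≤ Real.sin (x/2)) :
    ‖1 - Complex.exp (Complex.I * x)‖ = 2 * Real.sin (x/2) := by
  have e1 : 1 - Complex.exp (Complex.I * x)
      = Complex.exp (Complex.I * ((x/2:ℝ):ℂ)) *
        (Complex.exp (-(Complex.I * ((x/2:ℝ):ℂ))) - Complex.exp (Complex.I * ((x/2:ℝ):ℂ))) := by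
    rw [mul_sub, ← Complex.exp_add, ← Complex.exp_add]
    have h1 : Complex.I * ((x/2:ℝ):ℂ) + -(Complex.I * ((x/2:ℝ):ℂ)) = 0 := by ring
    have h2 : Complex.I * ((x/2:ℝ):ℂ) + Complex.I * ((x/2:ℝ):ℂ) = Complex.I * x := by
      push_cast; ring
    rw [h1, h2, Complex.exp_zero]
  rw [e1, norm_mul]
  have e2 : ‖Complex.exp (Complex.I * ((x/2:ℝ):ℂ))‖ = 1 := by
    rw [Complex.norm_exp]
    simp
  have e3 : Complex.exp (-(Complex.I * ((x/2:ℝ):ℂ))) - Complex.exp (Complex.I * ((x/2:ℝ):ℂ))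
      = -(2 * ((Real.sin (x/2) : ℝ):ℂ) * Complex.I) := by
    rw [show -(Complex.I * ((x/2:ℝ):ℂ)) = ((-(x/2):ℝ):ℂ) * Complex.I by push_cast; ring,
      show Complex.I * ((x/2:ℝ):ℂ) = ((x/2:ℝ):ℂ) * Complex.I by ring,
      Complex.exp_mul_I, Complex.exp_mul_I]
    push_cast
    rw [Complex.cos_neg, Complex.sin_neg]
    ring
  rw [e2, one_mul, e3]
  rw [norm_neg, norm_mul, norm_mul]
  rw [Complex.norm_real, Real.norm_eq_abs, Complex.norm_I, abs_of_nonneg hx]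
  simp

lemma abs_prod_eq_exp_sum (n : ℕ) (hn : 2 ≤ n) :
    ‖(∏ k ∈ Finset.Icc 1 n,
        (1 - Complex.exp (Complex.I * k * (3 * Real.pi / (2 * n)))))‖
      = Real.exp (∑ k ∈ Finset.Icc 1 n, Real.log (2*Real.sin ((k:ℝ)*(3*π/(4*(n:ℝ)))))) := by
  have hpi := Real.pi_pos
  have hn0 : (0:ℝ) < (n:ℝ) := by positivity
  rw [norm_prod, Real.exp_sum]
  refine Finset.prod_congr rfl fun k hk => ?_
  rw [Finset.mem_Icc] at hk
  have hk1 : (1:ℝ) ≤ (k:ℝ) := by exact_mod_cast hk.1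
  have hkn : (k:ℝ) ≤ (n:ℝ) := by exact_mod_cast hk.2
  set x : ℝ := (k:ℝ)*(3*π/(2*(n:ℝ))) with hx
  have hx2 : x/2 = (k:ℝ)*(3*π/(4*(n:ℝ))) := by rw [hx]; field_simp; ring
  have hx2pos : 0 < x/2 := by rw [hx2]; positivity
  have hx2le : x/2 ≤ 3*π/4 := by
    rw [hx2]
    rw [show (3:ℝ)*π/4 = (n:ℝ)*(3*π/(4*(n:ℝ))) by field_simp]
    have : 0 < 3*π/(4*(n:ℝ)) := by positivity
    nlinarith
  have hsinpos : 0 < Real.sin (x/2) := sin_pos_of_mem hx2pos hx2le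
  have harg : Complex.I * k * (3 * (Real.pi:ℂ) / (2 * (n:ℂ))) = Complex.I * (x:ℂ) := by
    rw [hx]
    push_cast
    field_simp
  calc ‖1 - Complex.exp (Complex.I * k * (3 * (Real.pi:ℂ) / (2 * (n:ℂ))))‖
      = ‖1 - Complex.exp (Complex.I * (x:ℂ))‖ := by rw [harg]
    _ = 2 * Real.sin (x/2) := abs_one_sub_exp x hsinpos.le
    _ = Real.exp (Real.log (2*Real.sin (x/2))) := (Real.exp_log (by positivity)).symm
    _ = Real.exp (Real.log (2*Real.sin ((k:ℝ)*(3*π/(4*(n:ℝ)))))) := by rw [hx2]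

theorem stmt_11 :
    ∃ C₀ : ℝ, 0 < C₀ ∧ ∀ n : ℕ, 2 ≤ n →
      (n : ℝ) ^ (-C₀) * Real.exp ((2 * (∑' m : ℕ, (-1 : ℝ) ^ m / (2 * m + 1) ^ 2) /
          (3 * Real.pi)) * n) ≤
        ‖(∏ k ∈ Finset.Icc 1 n,
          (1 - Complex.exp (Complex.I * k * (3 * Real.pi / (2 * n)))))‖ ∧
      ‖(∏ k ∈ Finset.Icc 1 n,
          (1 - Complex.exp (Complex.I * k * (3 * Real.pi / (2 * n)))))‖ ≤
        (n : ℝ) ^ (C₀ : ℝ) * Real.exp ((2 * (∑' m : ℕ, (-1 : ℝ) ^ m / (2 * m + 1) ^ 2) /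
          (3 * Real.pi)) * n) := by
  refine ⟨30, by norm_num, fun n hn => ?_⟩
  have hpi := Real.pi_pos
  have hn0 : (0:ℝ) < (n:ℝ) := by
    have : (0:ℕ) < n := by omega
    exact_mod_cast this
  have hn2 : (2:ℝ) ≤ (n:ℝ) := by exact_mod_cast hn
  have hlog2 : Real.log 2 ≤ Real.log n := Real.log_le_log (by norm_num) hn2
  have hlogn : (0.6931471803:ℝ) ≤ Real.log n := le_trans Real.log_two_gt_d9.le hlog2
  set L : ℝ := ∫ t in (0:ℝ)..(3*π/4), Real.log (2*Real.sin t) with hL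
  set G : ℝ := ∑' m : ℕ, (-1 : ℝ) ^ m / (2 * (m:ℝ) + 1) ^ 2 with hG
  have hGL : G = 2 * L := by
    rw [hG, hasSum_catalan.tsum_eq, hL, L_eq_half_catalan]
    ring
  set S : ℝ := ∑ k ∈ Finset.Icc 1 n, Real.log (2*Real.sin ((k:ℝ)*(3*π/(4*(n:ℝ))))) with hS
  have hAn : (2 * G / (3 * π)) * (n:ℝ) = (4*(n:ℝ)/(3*π)) * L := by
    rw [hGL]; field_simp; ring
  have hriem : |S - (2 * G / (3 * π)) * (n:ℝ)| ≤ 30 * Real.log n := by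
    rw [hAn]
    refine (riemann n hn).trans ?_
    nlinarith
  have habs := abs_prod_eq_exp_sum n hn
  rw [habs]
  have hrw : ∀ c : ℝ, (n:ℝ) ^ (c:ℝ) = Real.exp (Real.log n * c) :=
    fun c => Real.rpow_def_of_pos hn0 c
  rw [hrw, hrw]
  constructor
  · rw [← Real.exp_add]
    refine Real.exp_le_exp.mpr ?_
    have := abs_le.mp hriem
    linarith [this.1]
  · rw [← Real.exp_add]
    refine Real.exp_le_exp.mpr ?_
    have := abs_le.mp hriem
    linarith [this.2]
end

section
/- The L¹ norm of Q_n, (1/2π)∫_0^{2π}|∏_{k=1}^n (1+e^{ikθ})|dθ, is O(2^n/√n); specifically there is a constant C such that for all n ≥ 1, (1/2π)∫_0^{2π} ∏_{k=1}^n 2|cos(kθ/2)| dθ ≤ C·2^n/√n. -/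
open Finset

open Real MeasureTheory intervalIntegral in
private lemma wallis_prod (n : ℕ) :
    ((n : ℝ) + 1) * ((∫ x in (0:ℝ)..π, sin x ^ (n+1)) * ∫ x in (0:ℝ)..π, sin x ^ n) = 2 * π := by
  induction n with
  | zero =>
    norm_num [integral_sin]
  | succ m ih =>
    have hrec : (∫ x in (0:ℝ)..π, sin x ^ (m+2)) = (m+1)/(m+2) * ∫ x in (0:ℝ)..π, sin x ^ m := by
      rw [integral_sin_pow]
      simp
    rw [hrec]
    have h2 : ((m:ℝ)+2) ≠ 0 := by positivity
    field_simp
    push_cast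
    linear_combination ((m:ℝ)+2) * ih

open Real MeasureTheory in
private lemma sin_pow_int_le (n : ℕ) (hn : 1 ≤ n) :
    (∫ x in (0:ℝ)..π, sin x ^ n) ≤ Real.sqrt (2 * π / n) := by
  obtain ⟨m, rfl⟩ : ∃ m, n = m + 1 := ⟨n - 1, by omega⟩
  have hmono := integral_sin_pow_succ_le m
  have hpos := integral_sin_pow_pos (n := m + 1)
  have hw := wallis_prod m
  rw [Real.le_sqrt hpos.le (by positivity)]
  have h2 : ((m:ℝ) + 1) > 0 := by positivity
  push_cast
  rw [le_div_iff₀ h2]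
  nlinarith [mul_le_mul_of_nonneg_left (mul_le_mul_of_nonneg_left hmono hpos.le) h2.le]

open Real MeasureTheory in
private lemma abs_cos_pow_periodic (n : ℕ) :
    Function.Periodic (fun x : ℝ => |cos x| ^ n) π := by
  intro x
  simp [Real.cos_add_pi, abs_neg]

open Real MeasureTheory in
private lemma abs_cos_pow_int (n : ℕ) :
    (∫ x in (0:ℝ)..π, |cos x| ^ n) = ∫ x in (0:ℝ)..π, sin x ^ n := by
  have per := abs_cos_pow_periodic n
  have h1 : (∫ x in (0:ℝ)..π, |cos x| ^ n) = ∫ x in (-(π/2))..(-(π/2) + π), |cos x| ^ n := by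
    have := per.intervalIntegral_add_eq 0 (-(π/2))
    simpa using this
  have h2 : (∫ x in (-(π/2))..(-(π/2) + π), |cos x| ^ n)
      = ∫ x in (-(π/2))..(-(π/2) + π), cos x ^ n := by
    apply intervalIntegral.integral_congr
    intro x hx
    have hle : -(π/2) ≤ -(π/2) + π := by nlinarith [pi_pos]
    rw [Set.uIcc_of_le hle] at hx
    have hx1 : -(π/2) ≤ x := hx.1
    have hx2 : x ≤ π/2 := by have := hx.2; linarith
    simp only
    rw [abs_of_nonneg (Real.cos_nonneg_of_mem_Icc ⟨hx1, hx2⟩)]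
  have h3 : (∫ x in (0:ℝ)..π, sin x ^ n)
      = ∫ x in (π/2 - π)..(π/2 - 0), cos x ^ n := by
    rw [← intervalIntegral.integral_comp_sub_left (fun u => cos u ^ n) (π/2)]
    simp [Real.cos_pi_div_two_sub]
  rw [h1, h2, h3]
  norm_num
  congr 1 <;> ring

open Real MeasureTheory in
private lemma cos_freq_int (n k : ℕ) (hk : 1 ≤ k) :
    (∫ θ in (0:ℝ)..(2*π), |cos (k * θ / 2)| ^ n)
      = 2 * ∫ x in (0:ℝ)..π, sin x ^ n := by
  have hc : ((k:ℝ)/2) ≠ 0 := by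
    have : (0:ℝ) < k := by exact_mod_cast hk
    positivity
  have h0 : (∫ θ in (0:ℝ)..(2*π), |cos (k * θ / 2)| ^ n)
      = ∫ θ in (0:ℝ)..(2*π), (fun x => |cos x| ^ n) (((k:ℝ)/2) * θ) := by
    apply intervalIntegral.integral_congr
    intro x _
    simp only
    ring_nf
  have hcm := intervalIntegral.integral_comp_mul_left (a := 0) (b := 2*π)
    (fun x => |cos x| ^ n) hc
  rw [h0, hcm]
  have per := abs_cos_pow_periodic n
  have h_int : ∀ t₁ t₂ : ℝ, IntervalIntegrable (fun x => |cos x| ^ n) volume t₁ t₂ :=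
    fun t₁ t₂ => ((Real.continuous_cos.abs).pow n).intervalIntegrable t₁ t₂
  have hz := per.intervalIntegral_add_zsmul_eq (k : ℤ) 0 h_int
  have he1 : ((k:ℝ)/2) * 0 = 0 := by ring
  have he2 : ((k:ℝ)/2) * (2*π) = (0:ℝ) + (k:ℤ) • π := by
    rw [zsmul_eq_mul]
    push_cast
    ring
  have hz0 : (0:ℝ) + π = π := zero_add π
  rw [he1, he2, hz, hz0, abs_cos_pow_int, zsmul_eq_mul, smul_eq_mul]
  have hk0 : (k:ℝ) ≠ 0 := by
    have : (0:ℝ) < k := by exact_mod_cast hk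
    exact this.ne'
  push_cast
  field_simp


open Real MeasureTheory in
private lemma holder_main (n : ℕ) (hn : 1 ≤ n) :
    (∫ θ in (0:ℝ)..(2*π), ∏ k ∈ Finset.Icc 1 n, 2 * |cos (k * θ / 2)|)
      ≤ 2 ^ n * (2 * ∫ x in (0:ℝ)..π, sin x ^ n) := by
  have hn0 : (n:ℝ) ≠ 0 := by positivity
  set J := ∫ x in (0:ℝ)..π, sin x ^ n with hJdef
  have hJpos : 0 < J := integral_sin_pow_pos n
  have h2π : (0:ℝ) ≤ 2*π := by positivity
  set c : ℝ := 2 ^ n * (2 * J) with hcdef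
  have hc0 : 0 ≤ c := by positivity
  have hcontk : ∀ k : ℕ, Continuous fun θ : ℝ => 2 * |cos ((k:ℝ) * θ / 2)| := by
    intro k
    fun_prop
  have hcont : Continuous fun θ : ℝ => ∏ k ∈ Finset.Icc 1 n, 2 * |cos ((k:ℝ) * θ / 2)| :=
    continuous_finset_prod _ fun i _ => hcontk i
  have hnn : ∀ θ : ℝ, 0 ≤ ∏ k ∈ Finset.Icc 1 n, 2 * |cos ((k:ℝ) * θ / 2)| :=
    fun θ => Finset.prod_nonneg fun i _ => by positivity
  rw [intervalIntegral.integral_of_le h2π]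
  have hint : IntegrableOn (fun θ : ℝ => ∏ k ∈ Finset.Icc 1 n, 2 * |cos ((k:ℝ) * θ / 2)|)
      (Set.Ioc 0 (2*π)) volume :=
    (intervalIntegrable_iff_integrableOn_Ioc_of_le h2π).mp (hcont.intervalIntegrable _ _)
  have key : ENNReal.ofReal (∫ θ in Set.Ioc (0:ℝ) (2*π),
      ∏ k ∈ Finset.Icc 1 n, 2 * |cos ((k:ℝ) * θ / 2)|) ≤ ENNReal.ofReal c := by
    rw [MeasureTheory.ofReal_integral_eq_lintegral_ofReal hint (ae_of_all _ hnn)]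
    have hcard : (Finset.Icc 1 n).card = n := by
      rw [Nat.card_Icc]
      omega
    calc ∫⁻ θ, ENNReal.ofReal (∏ k ∈ Finset.Icc 1 n, 2 * |cos ((k:ℝ) * θ / 2)|)
          ∂(volume.restrict (Set.Ioc (0:ℝ) (2*π)))
        = ∫⁻ θ, ∏ k ∈ Finset.Icc 1 n,
            (ENNReal.ofReal ((2 * |cos ((k:ℝ) * θ / 2)|) ^ n)) ^ ((n:ℝ)⁻¹)
            ∂(volume.restrict (Set.Ioc (0:ℝ) (2*π))) := by
          congr 1
          funext θ
          rw [ENNReal.ofReal_prod_of_nonneg (fun i _ => by positivity)]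
          refine Finset.prod_congr rfl fun i _ => ?_
          rw [ENNReal.ofReal_pow (by positivity), ← ENNReal.rpow_natCast, ← ENNReal.rpow_mul,
            mul_inv_cancel₀ hn0, ENNReal.rpow_one]
      _ ≤ ∏ k ∈ Finset.Icc 1 n,
            (∫⁻ θ, ENNReal.ofReal ((2 * |cos ((k:ℝ) * θ / 2)|) ^ n)
              ∂(volume.restrict (Set.Ioc (0:ℝ) (2*π)))) ^ ((n:ℝ)⁻¹) := by
          refine ENNReal.lintegral_prod_norm_pow_le _ (fun i _ => ?_) ?_ (fun i _ => by positivity)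
          · exact (ENNReal.measurable_ofReal.comp
              (((hcontk i).pow n).measurable)).aemeasurable
          · rw [Finset.sum_const, hcard, nsmul_eq_mul, mul_inv_cancel₀ hn0]
      _ = ∏ k ∈ Finset.Icc 1 n, (ENNReal.ofReal c) ^ ((n:ℝ)⁻¹) := by
          refine Finset.prod_congr rfl fun i hi => ?_
          have hi1 : 1 ≤ i := (Finset.mem_Icc.mp hi).1
          have hik : IntegrableOn (fun θ : ℝ => (2 * |cos ((i:ℝ) * θ / 2)|) ^ n)
              (Set.Ioc 0 (2*π)) volume :=
            (intervalIntegrable_iff_integrableOn_Ioc_of_le h2π).mp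
              (((hcontk i).pow n).intervalIntegrable _ _)
          rw [← MeasureTheory.ofReal_integral_eq_lintegral_ofReal hik
            (ae_of_all _ fun θ => by positivity)]
          congr 1
          rw [← intervalIntegral.integral_of_le h2π]
          have : ∀ θ : ℝ, (2 * |cos ((i:ℝ) * θ / 2)|) ^ n = 2 ^ n * |cos ((i:ℝ) * θ / 2)| ^ n :=
            fun θ => mul_pow 2 _ n
          rw [intervalIntegral.integral_congr (fun θ _ => this θ),
            intervalIntegral.integral_const_mul, cos_freq_int n i hi1]
      _ = ENNReal.ofReal c := by
          rw [Finset.prod_const, hcard, ← ENNReal.rpow_natCast, ← ENNReal.rpow_mul,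
            inv_mul_cancel₀ hn0, ENNReal.rpow_one]
  exact (ENNReal.ofReal_le_ofReal_iff hc0).mp key

theorem stmt_17 :
    ∃ C : ℝ, ∀ n : ℕ, 1 ≤ n →
      (1 / (2 * Real.pi)) * ∫ θ in (0 : ℝ)..(2 * Real.pi),
          ∏ k ∈ Finset.Icc 1 n, 2 * |Real.cos (k * θ / 2)| ≤
        C * 2 ^ n / Real.sqrt n := by
  refine ⟨1, fun n hn => ?_⟩
  have hI := holder_main n hn
  have hJ := sin_pow_int_le n hn
  have hJpos : 0 < ∫ x in (0:ℝ)..Real.pi, Real.sin x ^ n := integral_sin_pow_pos n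
  have hs : 0 < Real.sqrt n := Real.sqrt_pos.mpr (by exact_mod_cast hn)
  have hπ := Real.pi_pos
  have hsq : Real.sqrt (2 * Real.pi / n) = Real.sqrt (2 * Real.pi) / Real.sqrt n :=
    Real.sqrt_div (by positivity) _
  have htπ : Real.sqrt (2 * Real.pi) ≤ Real.pi := by
    have h := Real.sqrt_le_sqrt (show 2 * Real.pi ≤ Real.pi ^ 2 by nlinarith [Real.pi_gt_three])
    rwa [Real.sqrt_sq hπ.le] at h
  have h1 : (1 / (2 * Real.pi)) * ∫ θ in (0:ℝ)..(2 * Real.pi),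
      ∏ k ∈ Finset.Icc 1 n, 2 * |Real.cos (k * θ / 2)|
      ≤ (1 / (2 * Real.pi)) * (2 ^ n * (2 * Real.sqrt (2 * Real.pi / n))) := by
    apply mul_le_mul_of_nonneg_left _ (by positivity)
    calc (∫ θ in (0:ℝ)..(2 * Real.pi), ∏ k ∈ Finset.Icc 1 n, 2 * |Real.cos (k * θ / 2)|)
        ≤ 2 ^ n * (2 * ∫ x in (0:ℝ)..Real.pi, Real.sin x ^ n) := hI
      _ ≤ 2 ^ n * (2 * Real.sqrt (2 * Real.pi / n)) := by
          apply mul_le_mul_of_nonneg_left _ (by positivity)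
          linarith
  refine h1.trans ?_
  rw [hsq]
  have heq : (1 / (2 * Real.pi)) * (2 ^ n * (2 * (Real.sqrt (2 * Real.pi) / Real.sqrt n)))
      = (Real.sqrt (2 * Real.pi) / Real.pi) * (2 ^ n / Real.sqrt n) := by
    field_simp
  rw [heq]
  have h2 : Real.sqrt (2 * Real.pi) / Real.pi ≤ 1 := (div_le_one hπ).mpr htπ
  calc (Real.sqrt (2 * Real.pi) / Real.pi) * (2 ^ n / Real.sqrt n)
      ≤ 1 * (2 ^ n / Real.sqrt n) := mul_le_mul_of_nonneg_right h2 (by positivity)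
    _ = 1 * 2 ^ n / Real.sqrt n := by ring
end
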